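/- arXiv:math/0603183 — 2 statements merged into one kernel-verified Lean document; each statement's English description precedes it below -/
import Mathlib

section
/- Let f : ℝ^d → ℂ be continuous and rapidly decreasing, i.e. for every q ∈ ℕ there is C_q > 0 with (1+|x|)^q |f(x)| ≤ C_q for all x. Let ρ ∈ 𝒮(ℝ^d) and let α be a multi-index. Then for every q ∈ ℕ there exists a constant C > 0 such that for all ε ∈ (0,1] and all x ∈ ℝ^d, (1+|x|)^q | ∫_{ℝ^d} f(x−y) (∂^α ρ_ε)(y) dy | ≤ C ε^{-|α|}; in particular the exponent of ε does not depend on q. -/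
open Set MeasureTheory

/-- The partial derivative of `f` in the `i`-th coordinate direction. -/
noncomputable def coordPDeriv (d : ℕ) (i : Fin d) (f : EuclideanSpace ℝ (Fin d) → ℂ) :
    EuclideanSpace ℝ (Fin d) → ℂ :=
  fun x => fderiv ℝ f x (EuclideanSpace.single i 1)

/-- The multi-index partial derivative `∂^α f`, where the multi-index `α` is encoded
as the list of coordinate directions in which one differentiates (so `|α| = α.length`). -/
noncomputable def multiPDeriv (d : ℕ) (α : List (Fin d)) (f : EuclideanSpace ℝ (Fin d) → ℂ) :
    EuclideanSpace ℝ (Fin d) → ℂ :=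
  α.foldr (coordPDeriv d) f

noncomputable def sMulti (d : ℕ) (α : List (Fin d))
    (ρ : SchwartzMap (EuclideanSpace ℝ (Fin d)) ℂ) : SchwartzMap (EuclideanSpace ℝ (Fin d)) ℂ :=
  α.foldr (fun i ψ => LineDeriv.lineDerivOpCLM ℝ (SchwartzMap (EuclideanSpace ℝ (Fin d)) ℂ) (EuclideanSpace.single i (1:ℝ)) ψ) ρ

lemma coordPDeriv_scale (d : ℕ) (i : Fin d)
    (ψ : SchwartzMap (EuclideanSpace ℝ (Fin d)) ℂ) (a : ℂ) (e : ℝ) :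
    coordPDeriv d i (fun y => a * ψ (e • y)) =
      fun y => a * (e : ℂ) * (LineDeriv.lineDerivOpCLM ℝ (SchwartzMap (EuclideanSpace ℝ (Fin d)) ℂ) (EuclideanSpace.single i (1:ℝ)) ψ) (e • y) := by
  funext y
  have hψ : HasFDerivAt ψ (fderiv ℝ ψ (e • y)) (e • y) :=
    (ψ.differentiable (e • y)).hasFDerivAt
  have hL : HasFDerivAt (fun y : EuclideanSpace ℝ (Fin d) => e • y)
      (e • (ContinuousLinearMap.id ℝ (EuclideanSpace ℝ (Fin d)))) y :=
    (hasFDerivAt_id y).const_smul e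
  have h1 : HasFDerivAt (fun y : EuclideanSpace ℝ (Fin d) => ψ (e • y))
      ((fderiv ℝ ψ (e • y)).comp (e • (ContinuousLinearMap.id ℝ (EuclideanSpace ℝ (Fin d))))) y :=
    hψ.comp y hL
  have h2 := h1.const_mul a
  simp only [coordPDeriv, h2.fderiv]
  simp [ContinuousLinearMap.smul_apply, LineDeriv.lineDerivOpCLM_apply, SchwartzMap.lineDerivOp_apply_eq_fderiv,
    Complex.real_smul, smul_eq_mul]
  ring

lemma multiPDeriv_scale (d : ℕ) (α : List (Fin d))
    (ρ : SchwartzMap (EuclideanSpace ℝ (Fin d)) ℂ) (c : ℂ) (e : ℝ) :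
    multiPDeriv d α (fun z => c * ρ (e • z)) =
      fun y => c * (e : ℂ) ^ α.length * (sMulti d α ρ) (e • y) := by
  induction α with
  | nil => simp [multiPDeriv, sMulti]
  | cons i α ih =>
      have : multiPDeriv d (i :: α) (fun z => c * ρ (e • z)) =
          coordPDeriv d i (multiPDeriv d α (fun z => c * ρ (e • z))) := rfl
      rw [this, ih, coordPDeriv_scale]
      have : sMulti d (i :: α) ρ =
          LineDeriv.lineDerivOpCLM ℝ (SchwartzMap (EuclideanSpace ℝ (Fin d)) ℂ) (EuclideanSpace.single i (1:ℝ)) (sMulti d α ρ) := rfl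
      rw [this]
      funext y
      rw [List.length_cons, pow_succ]
      ring


set_option maxHeartbeats 1000000 in
/-- For `f` continuous and rapidly decreasing and `ρ` Schwartz, for every `q` one has
`(1+|x|)^q |(f ∗ ∂^α ρ_ε)(x)| ≤ C ε^{-|α|}` uniformly in `ε ∈ (0,1]` and `x`; the
exponent of `ε` does not depend on `q`. -/
theorem stmt7 (d : ℕ) (f : EuclideanSpace ℝ (Fin d) → ℂ) (hf_cont : Continuous f)
    (hf_rd : ∀ q : ℕ, ∃ Cq > (0:ℝ), ∀ x, (1 + ‖x‖) ^ q * ‖f x‖ ≤ Cq)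
    (ρ : SchwartzMap (EuclideanSpace ℝ (Fin d)) ℂ) (α : List (Fin d)) :
    ∀ q : ℕ, ∃ C > (0:ℝ), ∀ ε ∈ Ioc (0:ℝ) 1, ∀ x,
      (1 + ‖x‖) ^ q *
        ‖∫ y, f (x - y) * multiPDeriv d α (fun z => (((ε ^ d)⁻¹ : ℝ) : ℂ) * ρ (ε⁻¹ • z)) y‖
        ≤ C * ε ^ (-(α.length : ℝ)) := by
  intro q
  obtain ⟨Cq, hCq, hCqf⟩ := hf_rd q
  set g := sMulti d α ρ with hg
  set n := α.length with hn
  set h : EuclideanSpace ℝ (Fin d) → ℝ := fun z => (1 + ‖z‖) ^ q * ‖g z‖ with hh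
  have hh_nonneg : ∀ z, 0 ≤ h z := fun z => by positivity
  have hh_int : Integrable h := by
    have hG : Integrable (fun z : EuclideanSpace ℝ (Fin d) => (2:ℝ)^q * ‖g z‖ + (2:ℝ)^q * (‖z‖ ^ q * ‖g z‖)) :=
      ((g.integrable).norm.const_mul _).add ((g.integrable_pow_mul volume q).const_mul _)
    refine hG.mono' ?_ ?_
    · exact (Continuous.mul (by continuity) (g.continuous.norm)).aestronglyMeasurable
    · filter_upwards with z
      have h1 : |h z| = h z := abs_of_nonneg (hh_nonneg z)
      rw [Real.norm_eq_abs, h1]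
      have ht : (0:ℝ) ≤ ‖z‖ := norm_nonneg _
      have key : (1 + ‖z‖) ^ q ≤ (2:ℝ)^q * (1 + ‖z‖ ^ q) := by
        rcases le_total ‖z‖ 1 with hz | hz
        · have : (1 + ‖z‖) ^ q ≤ (2:ℝ)^q := pow_le_pow_left₀ (by positivity) (by linarith) q
          nlinarith [pow_nonneg ht q, pow_pos (show (0:ℝ) < 2 by norm_num) q]
        · have : (1 + ‖z‖) ^ q ≤ (2 * ‖z‖) ^ q := pow_le_pow_left₀ (by positivity) (by linarith) q
          rw [mul_pow] at this
          nlinarith [pow_pos (show (0:ℝ) < 2 by norm_num) q]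
      calc h z ≤ ((2:ℝ)^q * (1 + ‖z‖ ^ q)) * ‖g z‖ :=
            mul_le_mul_of_nonneg_right key (norm_nonneg _)
        _ = (2:ℝ)^q * ‖g z‖ + (2:ℝ)^q * (‖z‖ ^ q * ‖g z‖) := by ring
  set M := ∫ z, h z with hM
  have hM0 : 0 ≤ M := integral_nonneg hh_nonneg
  refine ⟨Cq * (M + 1), by positivity, ?_⟩
  rintro ε ⟨hε0, hε1⟩ x
  have hεne : ε ≠ 0 := ne_of_gt hε0
  have hεinvpos : 0 < ε⁻¹ := inv_pos.mpr hε0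
  have hεinv1 : (1:ℝ) ≤ ε⁻¹ := by
    rw [le_inv_comm₀ one_pos hε0]; simpa using hε1
  set K : ℝ := (ε ^ d)⁻¹ * (ε⁻¹) ^ n with hK
  have hK0 : 0 ≤ K := by positivity
  rw [multiPDeriv_scale]
  have hbound : ∀ y : EuclideanSpace ℝ (Fin d),
      (1 + ‖x‖) ^ q * ‖f (x - y) * ((((ε ^ d)⁻¹ : ℝ) : ℂ) * ((ε⁻¹:ℝ) : ℂ) ^ n * g (ε⁻¹ • y))‖
        ≤ Cq * K * h (ε⁻¹ • y) := by
    intro y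
    have hnorm : ‖f (x - y) * ((((ε ^ d)⁻¹ : ℝ) : ℂ) * ((ε⁻¹:ℝ) : ℂ) ^ n * g (ε⁻¹ • y))‖
        = ‖f (x - y)‖ * (K * ‖g (ε⁻¹ • y)‖) := by
      simp [norm_mul, Complex.norm_real, abs_of_nonneg (le_of_lt hε0),
        abs_of_nonneg (le_of_lt hεinvpos), hK, abs_of_nonneg (inv_nonneg.mpr (pow_nonneg hε0.le d))]
    rw [hnorm]
    have hsy : ‖ε⁻¹ • y‖ = ε⁻¹ * ‖y‖ := by
      rw [norm_smul, Real.norm_eq_abs, abs_of_pos hεinvpos]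
    have hyb : (1 + ‖y‖) ≤ 1 + ‖ε⁻¹ • y‖ := by
      rw [hsy]; nlinarith [norm_nonneg y]
    have hA : (1 + ‖x‖) ≤ (1 + ‖x - y‖) * (1 + ‖ε⁻¹ • y‖) := by
      have h1 : ‖x‖ ≤ ‖x - y‖ + ‖y‖ := by
        have hxy : (x - y) + y = x := by abel
        calc ‖x‖ = ‖(x - y) + y‖ := by rw [hxy]
          _ ≤ ‖x - y‖ + ‖y‖ := norm_add_le _ _
      nlinarith [norm_nonneg (x - y), norm_nonneg y, norm_nonneg (ε⁻¹ • y)]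
    have hsub : (1 + ‖x‖) ^ q * ‖f (x - y)‖ ≤ Cq * (1 + ‖ε⁻¹ • y‖) ^ q := by
      calc (1 + ‖x‖) ^ q * ‖f (x - y)‖
          ≤ ((1 + ‖x - y‖) * (1 + ‖ε⁻¹ • y‖)) ^ q * ‖f (x - y)‖ :=
            mul_le_mul_of_nonneg_right (pow_le_pow_left₀ (by positivity) hA q) (norm_nonneg _)
        _ = (1 + ‖ε⁻¹ • y‖) ^ q * ((1 + ‖x - y‖) ^ q * ‖f (x - y)‖) := by
            rw [mul_pow]; ring
        _ ≤ (1 + ‖ε⁻¹ • y‖) ^ q * Cq :=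
            mul_le_mul_of_nonneg_left (hCqf (x - y)) (by positivity)
        _ = Cq * (1 + ‖ε⁻¹ • y‖) ^ q := mul_comm _ _
    calc (1 + ‖x‖) ^ q * (‖f (x - y)‖ * (K * ‖g (ε⁻¹ • y)‖))
        = ((1 + ‖x‖) ^ q * ‖f (x - y)‖) * (K * ‖g (ε⁻¹ • y)‖) := by ring
      _ ≤ (Cq * (1 + ‖ε⁻¹ • y‖) ^ q) * (K * ‖g (ε⁻¹ • y)‖) :=
          mul_le_mul_of_nonneg_right hsub (by positivity)
      _ = Cq * K * h (ε⁻¹ • y) := by simp only [hh]; ring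
  have hup_int : Integrable (fun y : EuclideanSpace ℝ (Fin d) => Cq * K * h (ε⁻¹ • y)) := by
    have := (integrable_comp_smul_iff (volume : Measure (EuclideanSpace ℝ (Fin d))) h (ne_of_gt hεinvpos)).mpr hh_int
    exact this.const_mul _
  have hcov : ∫ y : EuclideanSpace ℝ (Fin d), h (ε⁻¹ • y) = ε ^ d * M := by
    rw [Measure.integral_comp_inv_smul_of_nonneg
      (volume : Measure (EuclideanSpace ℝ (Fin d))) h hε0.le]
    have hfr : Module.finrank ℝ (EuclideanSpace ℝ (Fin d)) = d := finrank_euclideanSpace_fin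
    rw [hfr, smul_eq_mul]
  have hrpow : ε ^ (-(n : ℝ)) = (ε⁻¹) ^ n := by
    rw [Real.rpow_neg hε0.le, Real.rpow_natCast, inv_pow]
  calc (1 + ‖x‖) ^ q *
        ‖∫ y, f (x - y) * ((((ε ^ d)⁻¹ : ℝ) : ℂ) * ((ε⁻¹:ℝ) : ℂ) ^ n * g (ε⁻¹ • y))‖
      ≤ (1 + ‖x‖) ^ q *
        ∫ y, ‖f (x - y) * ((((ε ^ d)⁻¹ : ℝ) : ℂ) * ((ε⁻¹:ℝ) : ℂ) ^ n * g (ε⁻¹ • y))‖ :=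
        mul_le_mul_of_nonneg_left (norm_integral_le_integral_norm _) (by positivity)
    _ = ∫ y, (1 + ‖x‖) ^ q *
        ‖f (x - y) * ((((ε ^ d)⁻¹ : ℝ) : ℂ) * ((ε⁻¹:ℝ) : ℂ) ^ n * g (ε⁻¹ • y))‖ :=
        (integral_const_mul _ _).symm
    _ ≤ ∫ y, Cq * K * h (ε⁻¹ • y) := by
        refine integral_mono_of_nonneg ?_ hup_int ?_
        · filter_upwards with y; positivity
        · filter_upwards with y; exact hbound y
    _ = Cq * K * (ε ^ d * M) := by rw [integral_const_mul, hcov]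
    _ = Cq * M * (ε⁻¹) ^ n := by
        rw [hK]; field_simp
    _ ≤ Cq * (M + 1) * ε ^ (-(n : ℝ)) := by
        rw [hrpow]
        have : (0:ℝ) < (ε⁻¹) ^ n := pow_pos hεinvpos n
        nlinarith
end

section
/- Let R be a regular set of sequences and let (u_ε)_{ε∈(0,1]} be a net of Schwartz functions on ℝ^d for which there exists N ∈ R with μ_{q,l}(u_ε) = O(ε^{-N(q)}) as ε→0 for all (q,l) ∈ ℕ² (a bound depending only on the weight index q). Then there exists N' ∈ R such that μ_{q,l}(û_ε) = O(ε^{-N'(l)}) as ε→0 for all (q,l) ∈ ℕ² (a bound depending only on the derivative index l). -/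
open Set MeasureTheory

/-- A regular set of sequences `N : ℕ → [0,∞)`. -/
def IsRegularSeq (R : Set (ℕ → ℝ)) : Prop :=
  R.Nonempty ∧ (∀ N ∈ R, ∀ n : ℕ, 0 ≤ N n) ∧
  (∀ N ∈ R, ∀ k k' : ℕ, ∃ N' ∈ R, ∀ n : ℕ, N (n + k) + (k' : ℝ) ≤ N' n) ∧
  (∀ N₁ ∈ R, ∀ N₂ ∈ R, ∃ N₃ ∈ R, ∀ n : ℕ, max (N₁ n) (N₂ n) ≤ N₃ n) ∧
  (∀ N₁ ∈ R, ∀ N₂ ∈ R, ∃ N₃ ∈ R, ∀ l₁ l₂ : ℕ, N₁ l₁ + N₂ l₂ ≤ N₃ (l₁ + l₂))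

/-- The Fourier transform `û(ξ) = ∫ e^{-i x·ξ} u(x) dx` on `ℝ^d`. -/
noncomputable def ftransform (d : ℕ) (u : EuclideanSpace ℝ (Fin d) → ℂ) :
    EuclideanSpace ℝ (Fin d) → ℂ :=
  fun ξ => ∫ x, Complex.exp (-(Complex.I * ((inner ℝ x ξ : ℝ) : ℂ))) * u x

open Real FourierTransform

lemma ftransform_eq_fourierIntegral (d : ℕ) (f : EuclideanSpace ℝ (Fin d) → ℂ)
    (ξ : EuclideanSpace ℝ (Fin d)) :
    ftransform d f ξ = 𝓕 f ((2 * π)⁻¹ • ξ) := by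
  rw [Real.fourier_eq']
  unfold ftransform
  congr 1 with x
  rw [real_inner_smul_right, smul_eq_mul]
  congr 1
  have hπ : (2 * π) * (2 * π)⁻¹ = 1 := mul_inv_cancel₀ (by positivity)
  have h : -2 * π * ((2 * π)⁻¹ * (inner ℝ x ξ : ℝ)) = -(inner ℝ x ξ : ℝ) := by
    have : -2 * π * ((2 * π)⁻¹ * (inner ℝ x ξ : ℝ)) = -(((2*π) * (2*π)⁻¹) * (inner ℝ x ξ : ℝ)) := by
      ring
    rw [this, hπ, one_mul]
  rw [h]
  push_cast
  ring

lemma key_bound (d : ℕ) (f : SchwartzMap (EuclideanSpace ℝ (Fin d)) ℂ) (q n : ℕ)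
    (ξ : EuclideanSpace ℝ (Fin d)) :
    (1 + ‖ξ‖) ^ q * ‖iteratedFDeriv ℝ n (ftransform d ⇑f) ξ‖ ≤
      (2 * π) ^ q * 2 ^ q * 2 * (2 * π) ^ n * (2 * (n : ℝ) + 2) ^ q *
        ∑ p ∈ Finset.range (n + 1) ×ˢ Finset.range (q + 1),
          ∫ v, ‖v‖ ^ p.1 * ‖iteratedFDeriv ℝ p.2 (⇑f) v‖ := by
  set c : ℝ := (2 * π)⁻¹ with hc
  have hπ1 : (1 : ℝ) ≤ 2 * π := by linarith [Real.pi_gt_three]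
  have hc0 : 0 < c := by positivity
  have hc1 : c ≤ 1 := by rw [hc, inv_le_one₀ (by positivity)]; exact hπ1
  set A : EuclideanSpace ℝ (Fin d) →L[ℝ] EuclideanSpace ℝ (Fin d) :=
    c • ContinuousLinearMap.id ℝ (EuclideanSpace ℝ (Fin d)) with hA
  have hAapp : ∀ x : EuclideanSpace ℝ (Fin d), A x = c • x := fun x => rfl
  have hAnorm : ‖A‖ ≤ 1 := by
    refine (ContinuousLinearMap.opNorm_smul_le c _).trans ?_
    rw [Real.norm_eq_abs, abs_of_pos hc0]
    calc c * ‖ContinuousLinearMap.id ℝ (EuclideanSpace ℝ (Fin d))‖ ≤ 1 * 1 :=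
          mul_le_mul hc1 ContinuousLinearMap.norm_id_le (norm_nonneg _) zero_le_one
      _ = 1 := mul_one 1
  set g := 𝓕 (⇑f : EuclideanSpace ℝ (Fin d) → ℂ) with hg
  have hft : ftransform d ⇑f = g ∘ A := by
    funext x
    rw [ftransform_eq_fourierIntegral]
    rfl
  have hgsmooth : ContDiff ℝ (n : ℕ∞) g :=
    Real.contDiff_fourier (fun k _ => f.integrable_pow_mul volume k)
  set w : EuclideanSpace ℝ (Fin d) := A ξ with hw
  have hder : iteratedFDeriv ℝ n (ftransform d ⇑f) ξ =
      (iteratedFDeriv ℝ n g w).compContinuousLinearMap fun _ => A := by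
    rw [hft]
    exact A.iteratedFDeriv_comp_right hgsmooth ξ le_rfl
  have hnorm : ‖iteratedFDeriv ℝ n (ftransform d ⇑f) ξ‖ ≤ ‖iteratedFDeriv ℝ n g w‖ := by
    rw [hder]
    refine (ContinuousMultilinearMap.norm_compContinuousLinearMap_le _ _).trans ?_
    calc ‖iteratedFDeriv ℝ n g w‖ * ∏ _i : Fin n, ‖A‖
        ≤ ‖iteratedFDeriv ℝ n g w‖ * 1 :=
          mul_le_mul_of_nonneg_left
            (Finset.prod_le_one (fun _ _ => norm_nonneg A) (fun _ _ => hAnorm)) (norm_nonneg _)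
      _ = _ := mul_one _
  have hwnorm : ‖ξ‖ = 2 * π * ‖w‖ := by
    rw [hw, hAapp, norm_smul, Real.norm_eq_abs, abs_of_pos hc0, hc]
    field_simp
  have h1 : (1 + ‖ξ‖) ^ q ≤ (2 * π) ^ q * (1 + ‖w‖) ^ q := by
    rw [← mul_pow]
    refine pow_le_pow_left₀ (by positivity) ?_ q
    rw [hwnorm]
    nlinarith [norm_nonneg w]
  have h2 : (1 + ‖w‖) ^ q ≤ 2 ^ q * (1 + ‖w‖ ^ q) := by
    have hm : 1 + ‖w‖ ≤ 2 * max 1 ‖w‖ := by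
      rcases le_total ‖w‖ 1 with h | h
      · have : (1:ℝ) ≤ max 1 ‖w‖ := le_max_left _ _
        linarith
      · have : ‖w‖ ≤ max 1 ‖w‖ := le_max_right _ _
        linarith
    calc (1 + ‖w‖) ^ q ≤ (2 * max 1 ‖w‖) ^ q :=
          pow_le_pow_left₀ (by positivity) hm q
      _ = 2 ^ q * (max 1 ‖w‖) ^ q := mul_pow _ _ _
      _ ≤ 2 ^ q * (1 + ‖w‖ ^ q) := by
          refine mul_le_mul_of_nonneg_left ?_ (by positivity)
          rcases le_total ‖w‖ 1 with h | h
          · rw [max_eq_left h, one_pow]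
            have : (0:ℝ) ≤ ‖w‖ ^ q := pow_nonneg (norm_nonneg w) q
            linarith
          · rw [max_eq_right h]
            linarith
  set S : ℝ := ∑ p ∈ Finset.range (n + 1) ×ˢ Finset.range (q + 1),
      ∫ v, ‖v‖ ^ p.1 * ‖iteratedFDeriv ℝ p.2 (⇑f) v‖ with hS
  have hSnonneg : 0 ≤ S :=
    Finset.sum_nonneg fun p _ => integral_nonneg fun v => by positivity
  have hint : ∀ (k m : ℕ), (k : ℕ∞) ≤ (⊤ : ℕ∞) → (m : ℕ∞) ≤ (⊤ : ℕ∞) →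
      Integrable (fun v : EuclideanSpace ℝ (Fin d) =>
        ‖v‖ ^ k * ‖iteratedFDeriv ℝ m (⇑f) v‖) volume :=
    fun k m _ _ => f.integrable_pow_mul_iteratedFDeriv volume k m
  have hkey : ∀ j : ℕ, j ≤ q → ‖w‖ ^ j * ‖iteratedFDeriv ℝ n g w‖ ≤
      (2 * π) ^ n * (2 * (n : ℝ) + 2) ^ q * S := by
    intro j hj
    have h := Real.pow_mul_norm_iteratedFDeriv_fourier_le (K := (⊤ : ℕ∞)) (N := (⊤ : ℕ∞))
      (f.smooth ⊤) hint (le_top (a := (n : ℕ∞))) (le_top (a := (j : ℕ∞))) w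
    refine h.trans ?_
    have hsub : Finset.range (n + 1) ×ˢ Finset.range (j + 1) ⊆
        Finset.range (n + 1) ×ˢ Finset.range (q + 1) :=
      Finset.product_subset_product le_rfl (Finset.range_subset_range.2 (by omega))
    have hS' : (∑ p ∈ Finset.range (n + 1) ×ˢ Finset.range (j + 1),
        ∫ v, ‖v‖ ^ p.1 * ‖iteratedFDeriv ℝ p.2 (⇑f) v‖) ≤ S :=
      Finset.sum_le_sum_of_subset_of_nonneg hsub
        (fun p _ _ => integral_nonneg fun v => by positivity)
    have hS'nonneg : (0:ℝ) ≤ ∑ p ∈ Finset.range (n + 1) ×ˢ Finset.range (j + 1),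
        ∫ v, ‖v‖ ^ p.1 * ‖iteratedFDeriv ℝ p.2 (⇑f) v‖ :=
      Finset.sum_nonneg fun p _ => integral_nonneg fun v => by positivity
    have hb : ((2:ℝ) * (n:ℝ) + 2) ^ j ≤ (2 * (n:ℝ) + 2) ^ q :=
      pow_le_pow_right₀ (by linarith [Nat.cast_nonneg (α := ℝ) n]) hj
    have hcoef : (2 * π) ^ n * (2 * (n:ℝ) + 2) ^ j ≤ (2 * π) ^ n * (2 * (n:ℝ) + 2) ^ q :=
      mul_le_mul_of_nonneg_left hb (by positivity)
    exact mul_le_mul hcoef hS' hS'nonneg (by positivity)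
  have hk0 : ‖iteratedFDeriv ℝ n g w‖ ≤ (2 * π) ^ n * (2 * (n : ℝ) + 2) ^ q * S := by
    simpa using hkey 0 (Nat.zero_le q)
  have hkq := hkey q le_rfl
  have hmain : (1 + ‖w‖ ^ q) * ‖iteratedFDeriv ℝ n g w‖ ≤
      2 * ((2 * π) ^ n * (2 * (n : ℝ) + 2) ^ q * S) := by
    have hexp : (1 + ‖w‖ ^ q) * ‖iteratedFDeriv ℝ n g w‖ =
        ‖iteratedFDeriv ℝ n g w‖ + ‖w‖ ^ q * ‖iteratedFDeriv ℝ n g w‖ := by ring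
    rw [hexp]
    linarith
  calc (1 + ‖ξ‖) ^ q * ‖iteratedFDeriv ℝ n (ftransform d ⇑f) ξ‖
      ≤ (2 * π) ^ q * (1 + ‖w‖) ^ q * ‖iteratedFDeriv ℝ n g w‖ :=
        mul_le_mul h1 hnorm (norm_nonneg _) (by positivity)
    _ ≤ (2 * π) ^ q * (2 ^ q * (1 + ‖w‖ ^ q)) * ‖iteratedFDeriv ℝ n g w‖ :=
        mul_le_mul_of_nonneg_right
          (mul_le_mul_of_nonneg_left h2 (by positivity)) (norm_nonneg _)
    _ = (2 * π) ^ q * 2 ^ q * ((1 + ‖w‖ ^ q) * ‖iteratedFDeriv ℝ n g w‖) := by ring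
    _ ≤ (2 * π) ^ q * 2 ^ q * (2 * ((2 * π) ^ n * (2 * (n : ℝ) + 2) ^ q * S)) :=
        mul_le_mul_of_nonneg_left hmain (by positivity)
    _ = (2 * π) ^ q * 2 ^ q * 2 * (2 * π) ^ n * (2 * (n : ℝ) + 2) ^ q * S := by ring

/-- Exchange theorem, the other direction: moderate bounds depending only on the weight
index `q` are transformed by the Fourier transform into moderate bounds depending only
on the derivative index `l`. -/
theorem stmt11 (d : ℕ) (R : Set (ℕ → ℝ)) (hR : IsRegularSeq R)
    (u : ℝ → SchwartzMap (EuclideanSpace ℝ (Fin d)) ℂ)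
    (hu : ∃ N ∈ R, ∀ q l : ℕ, ∃ C > (0:ℝ), ∃ ε₀ ∈ Ioc (0:ℝ) 1, ∀ ε ∈ Ioo (0:ℝ) ε₀,
      ∀ x, ∀ n ≤ l, (1 + ‖x‖) ^ q * ‖iteratedFDeriv ℝ n (⇑(u ε)) x‖ ≤ C * ε ^ (-(N q))) :
    ∃ N' ∈ R, ∀ q l : ℕ, ∃ C > (0:ℝ), ∃ ε₀ ∈ Ioc (0:ℝ) 1, ∀ ε ∈ Ioo (0:ℝ) ε₀,
      ∀ ξ, ∀ n ≤ l,
        (1 + ‖ξ‖) ^ q * ‖iteratedFDeriv ℝ n (ftransform d (⇑(u ε))) ξ‖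
          ≤ C * ε ^ (-(N' l)) := by

  obtain ⟨N, hN, hbound⟩ := hu
  obtain ⟨N', hN'R, hNN'⟩ := hR.2.2.1 N hN (d + 1) 0
  refine ⟨N', hN'R, ?_⟩
  intro q l
  obtain ⟨C₁, hC₁, ε₀, hε₀, hC⟩ := hbound (l + d + 1) q
  have hexp : N (l + d + 1) ≤ N' l := by
    have h := hNN' l
    rw [show l + (d + 1) = l + d + 1 by omega] at h
    simpa using h
  set Cd : ℝ := ∫ v : EuclideanSpace ℝ (Fin d), (1 + ‖v‖) ^ (-((d:ℝ) + 1)) with hCd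
  have hCd0 : 0 ≤ Cd := integral_nonneg fun v => Real.rpow_nonneg (by positivity) _
  have hCdint : Integrable
      (fun v : EuclideanSpace ℝ (Fin d) => (1 + ‖v‖) ^ (-((d:ℝ) + 1))) volume := by
    apply integrable_one_add_norm
    rw [finrank_euclideanSpace_fin]
    linarith
  set K : ℝ := (2 * π) ^ q * 2 ^ q * 2 * (2 * π) ^ l * (2 * (l:ℝ) + 2) ^ q with hK
  have hπ1 : (1 : ℝ) ≤ 2 * π := by linarith [Real.pi_gt_three]
  have hKpos : 0 < K := by positivity
  refine ⟨K * (((l:ℝ) + 1) * ((q:ℝ) + 1)) * (C₁ * (Cd + 1)),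
    by positivity, ε₀, hε₀, ?_⟩
  intro ε hε ξ n hn
  have hεpos : 0 < ε := hε.1
  have hε1 : ε ≤ 1 := le_of_lt (lt_of_lt_of_le hε.2 hε₀.2)
  set a : ℝ := ε ^ (-(N (l + d + 1))) with ha
  have ha0 : 0 ≤ a := Real.rpow_nonneg hεpos.le _
  have hIbound : ∀ i ≤ l, ∀ j ≤ q,
      (∫ v, ‖v‖ ^ i * ‖iteratedFDeriv ℝ j (⇑(u ε)) v‖) ≤ C₁ * a * (Cd + 1) := by
    intro i hi j hj
    have hpt : ∀ v : EuclideanSpace ℝ (Fin d),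
        ‖v‖ ^ i * ‖iteratedFDeriv ℝ j (⇑(u ε)) v‖ ≤
          (C₁ * a) * (1 + ‖v‖) ^ (-((d:ℝ) + 1)) := by
      intro v
      have hx1 : (1:ℝ) ≤ 1 + ‖v‖ := by linarith [norm_nonneg v]
      have hx0 : (0:ℝ) < 1 + ‖v‖ := by linarith
      have h1 : ‖v‖ ^ i ≤ (1 + ‖v‖) ^ l :=
        le_trans (pow_le_pow_left₀ (norm_nonneg v) (by linarith) i)
          (pow_le_pow_right₀ hx1 hi)
      have hrn : (1 + ‖v‖) ^ (-((d:ℝ) + 1)) = ((1 + ‖v‖) ^ (d + 1))⁻¹ := by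
        rw [show -((d:ℝ) + 1) = -(((d + 1 : ℕ)) : ℝ) by push_cast; ring,
          Real.rpow_neg hx0.le, Real.rpow_natCast]
      have hsplit : (1 + ‖v‖) ^ l =
          (1 + ‖v‖) ^ (l + d + 1) * (1 + ‖v‖) ^ (-((d:ℝ) + 1)) := by
        rw [hrn, show l + d + 1 = l + (d + 1) by omega, pow_add, mul_assoc,
          mul_inv_cancel₀ (pow_ne_zero _ hx0.ne'), mul_one]
      have hu' : (1 + ‖v‖) ^ (l + d + 1) * ‖iteratedFDeriv ℝ j (⇑(u ε)) v‖ ≤ C₁ * a :=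
        hC ε hε v j hj
      calc ‖v‖ ^ i * ‖iteratedFDeriv ℝ j (⇑(u ε)) v‖
          ≤ (1 + ‖v‖) ^ l * ‖iteratedFDeriv ℝ j (⇑(u ε)) v‖ :=
            mul_le_mul_of_nonneg_right h1 (norm_nonneg _)
        _ = ((1 + ‖v‖) ^ (l + d + 1) * ‖iteratedFDeriv ℝ j (⇑(u ε)) v‖) *
              (1 + ‖v‖) ^ (-((d:ℝ) + 1)) := by rw [hsplit]; ring
        _ ≤ (C₁ * a) * (1 + ‖v‖) ^ (-((d:ℝ) + 1)) :=
            mul_le_mul_of_nonneg_right hu' (Real.rpow_nonneg hx0.le _)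
    calc (∫ v, ‖v‖ ^ i * ‖iteratedFDeriv ℝ j (⇑(u ε)) v‖)
        ≤ ∫ v, (C₁ * a) * (1 + ‖v‖) ^ (-((d:ℝ) + 1)) :=
          integral_mono ((u ε).integrable_pow_mul_iteratedFDeriv volume i j)
            (hCdint.const_mul _) hpt
      _ = (C₁ * a) * Cd := by rw [integral_const_mul]
      _ ≤ C₁ * a * (Cd + 1) :=
          mul_le_mul_of_nonneg_left (by linarith) (by positivity)
  -- sum bound
  set S : ℝ := ∑ p ∈ Finset.range (n + 1) ×ˢ Finset.range (q + 1),
      ∫ v, ‖v‖ ^ p.1 * ‖iteratedFDeriv ℝ p.2 (⇑(u ε)) v‖ with hS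
  have hSnonneg : 0 ≤ S :=
    Finset.sum_nonneg fun p _ => integral_nonneg fun v => by positivity
  have hsum : S ≤ (((l:ℝ) + 1) * ((q:ℝ) + 1)) * (C₁ * a * (Cd + 1)) := by
    refine (Finset.sum_le_card_nsmul _ _ (C₁ * a * (Cd + 1)) ?_).trans ?_
    · intro p hp
      simp only [Finset.mem_product, Finset.mem_range] at hp
      exact hIbound p.1 (by omega) p.2 (by omega)
    · rw [Finset.card_product, Finset.card_range, Finset.card_range, nsmul_eq_mul]
      refine mul_le_mul_of_nonneg_right ?_ (by positivity)
      push_cast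
      have hn' : (n:ℝ) ≤ (l:ℝ) := Nat.cast_le.2 hn
      have hq0 : (0:ℝ) ≤ (q:ℝ) := Nat.cast_nonneg q
      nlinarith
  -- coefficient bound
  have hcoef : (2 * π) ^ q * 2 ^ q * 2 * (2 * π) ^ n * (2 * (n:ℝ) + 2) ^ q ≤ K := by
    rw [hK]
    have h1 : (2 * π) ^ n ≤ (2 * π) ^ l := pow_le_pow_right₀ hπ1 hn
    have h2 : (2 * (n:ℝ) + 2) ^ q ≤ (2 * (l:ℝ) + 2) ^ q := by
      refine pow_le_pow_left₀ (by positivity) ?_ q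
      have : (n:ℝ) ≤ (l:ℝ) := Nat.cast_le.2 hn
      linarith
    calc (2 * π) ^ q * 2 ^ q * 2 * (2 * π) ^ n * (2 * (n:ℝ) + 2) ^ q
        ≤ (2 * π) ^ q * 2 ^ q * 2 * (2 * π) ^ l * (2 * (n:ℝ) + 2) ^ q := by
          refine mul_le_mul_of_nonneg_right ?_ (by positivity)
          exact mul_le_mul_of_nonneg_left h1 (by positivity)
      _ ≤ (2 * π) ^ q * 2 ^ q * 2 * (2 * π) ^ l * (2 * (l:ℝ) + 2) ^ q :=
          mul_le_mul_of_nonneg_left h2 (by positivity)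
  have hrpow : a ≤ ε ^ (-(N' l)) :=
    Real.rpow_le_rpow_of_exponent_ge hεpos hε1 (neg_le_neg hexp)
  calc (1 + ‖ξ‖) ^ q * ‖iteratedFDeriv ℝ n (ftransform d (⇑(u ε))) ξ‖
      ≤ (2 * π) ^ q * 2 ^ q * 2 * (2 * π) ^ n * (2 * (n:ℝ) + 2) ^ q * S :=
        key_bound d (u ε) q n ξ
    _ ≤ K * S := mul_le_mul_of_nonneg_right hcoef hSnonneg
    _ ≤ K * ((((l:ℝ) + 1) * ((q:ℝ) + 1)) * (C₁ * a * (Cd + 1))) :=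
        mul_le_mul_of_nonneg_left hsum hKpos.le
    _ = (K * (((l:ℝ) + 1) * ((q:ℝ) + 1)) * (C₁ * (Cd + 1))) * a := by ring
    _ ≤ (K * (((l:ℝ) + 1) * ((q:ℝ) + 1)) * (C₁ * (Cd + 1))) * ε ^ (-(N' l)) := by
        refine mul_le_mul_of_nonneg_left hrpow ?_
        have : 0 < Cd + 1 := by linarith
        positivity
end
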